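/- (Semistability equals stability inside the chamber, Remark 3.3) Let n ≥ 2, c ≥ 1, and let θ = (θ₀, θ₁) ∈ ℝ² satisfy θ₀ > 0 and −θ₀ < θ₁ < −((c−1)/c)·θ₀. Then every θ-semistable (c,c)-dimensional framed representation of Λ_n is θ-stable: for every nonzero subrepresentation (S₀,S₁) with S₀ ⊆ ker e one has θ₀·dim S₀ + θ₁·dim S₁ < 0, and for every proper subrepresentation (S₀,S₁) ≠ (V₀,V₁) with Im f_q ⊆ S₀ for all q one has θ₀·dim S₀ + θ₁·dim S₁ < (θ₀+θ₁)·c. -/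

import Mathlib

lemma chamber_key (c : ℕ) (hc : 1 ≤ c) (θ₀ θ₁ : ℝ) (hθ₀ : 0 < θ₀) (hθ₁ : -θ₀ < θ₁)
    (hθ₁' : θ₁ < -(((c : ℝ) - 1) / c) * θ₀) (a b : ℕ) (ha : a ≤ c) (hb : b ≤ c)
    (h : θ₀ * a + θ₁ * b = 0) : a = 0 ∧ b = 0 := by
  have hcR : (0:ℝ) < c := by exact_mod_cast hc
  rcases Nat.eq_zero_or_pos b with hb0 | hb1
  · subst hb0
    have : (a:ℝ) = 0 := by push_cast at h ⊢; nlinarith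
    exact ⟨by exact_mod_cast this, rfl⟩
  · exfalso
    have hbR : (1:ℝ) ≤ b := by exact_mod_cast hb1
    have hbc : (b:ℝ) ≤ c := by exact_mod_cast hb
    have h1 : (a:ℝ) < b := by nlinarith
    have h2 : ((c:ℝ) - 1) * b < c * a := by
      have : -θ₁ * (c:ℝ) > ((c:ℝ) - 1) * θ₀ := by
        have h4 := mul_lt_mul_of_pos_right hθ₁' hcR
        have h5 : -(((c:ℝ) - 1) / c) * θ₀ * c = -(((c:ℝ) - 1) * θ₀) := by
          field_simp
        rw [h5] at h4
        linarith
      nlinarith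
    have h3 : (b:ℝ) - 1 < a := by nlinarith
    have hab : a + 1 ≤ b := by exact_mod_cast h1
    have : (a:ℝ) + 1 ≤ b := by exact_mod_cast hab
    linarith


open Module

/-- (Semistability equals stability inside the chamber, Remark 3.3) For θ in the open
cone Γ_c, every θ-semistable (c,c)-dimensional framed representation of Λ_n is
θ-stable. -/
theorem stmt_14 (n c : ℕ) (hn : 2 ≤ n) (hc : 1 ≤ c)
    (θ₀ θ₁ : ℝ) (hθ₀ : 0 < θ₀) (hθ₁ : -θ₀ < θ₁) (hθ₁' : θ₁ < -(((c : ℝ) - 1) / c) * θ₀)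
    (V₀ V₁ W : Type) [AddCommGroup V₀] [Module ℂ V₀] [FiniteDimensional ℂ V₀]
    [AddCommGroup V₁] [Module ℂ V₁] [FiniteDimensional ℂ V₁]
    [AddCommGroup W] [Module ℂ W] [FiniteDimensional ℂ W]
    (hV₀ : finrank ℂ V₀ = c) (hV₁ : finrank ℂ V₁ = c) (hW : finrank ℂ W = 1)
    (A₁ A₂ : V₀ →ₗ[ℂ] V₁)
    (C : Fin n → (V₁ →ₗ[ℂ] V₀))
    (e : V₀ →ₗ[ℂ] W) (f : Fin (n - 1) → (W →ₗ[ℂ] V₀))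
    -- the relations (Q1)
    (hQ1a : ∀ q : Fin (n - 1),
      A₂ ∘ₗ C ⟨q.1 + 1, by have := q.2; omega⟩ = A₁ ∘ₗ C ⟨q.1, by have := q.2; omega⟩)
    (hQ1b : ∀ q : Fin (n - 1),
      C ⟨q.1 + 1, by have := q.2; omega⟩ ∘ₗ A₂ =
        C ⟨q.1, by have := q.2; omega⟩ ∘ₗ A₁ + f q ∘ₗ e)
    -- θ-semistability
    (hss : ∀ (S₀ : Submodule ℂ V₀) (S₁ : Submodule ℂ V₁),
      S₀.map A₁ ≤ S₁ → S₀.map A₂ ≤ S₁ →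
      (∀ q : Fin n, S₁.map (C q) ≤ S₀) →
      ((S₀ ≤ LinearMap.ker e →
          θ₀ * (finrank ℂ S₀ : ℝ) + θ₁ * (finrank ℂ S₁ : ℝ) ≤ 0) ∧
       ((∀ q, LinearMap.range (f q) ≤ S₀) →
          θ₀ * (finrank ℂ S₀ : ℝ) + θ₁ * (finrank ℂ S₁ : ℝ) ≤ (θ₀ + θ₁) * c))) :
    -- θ-stability
    ∀ (S₀ : Submodule ℂ V₀) (S₁ : Submodule ℂ V₁),
      S₀.map A₁ ≤ S₁ → S₀.map A₂ ≤ S₁ →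
      (∀ q : Fin n, S₁.map (C q) ≤ S₀) →
      ((S₀ ≤ LinearMap.ker e → ¬(S₀ = ⊥ ∧ S₁ = ⊥) →
          θ₀ * (finrank ℂ S₀ : ℝ) + θ₁ * (finrank ℂ S₁ : ℝ) < 0) ∧
       ((∀ q, LinearMap.range (f q) ≤ S₀) → ¬(S₀ = ⊤ ∧ S₁ = ⊤) →
          θ₀ * (finrank ℂ S₀ : ℝ) + θ₁ * (finrank ℂ S₁ : ℝ) < (θ₀ + θ₁) * c)) := by
  intro S₀ S₁ h1 h2 h3
  obtain ⟨hi, hii⟩ := hss S₀ S₁ h1 h2 h3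
  have ha : finrank ℂ S₀ ≤ c := hV₀ ▸ Submodule.finrank_le S₀
  have hb : finrank ℂ S₁ ≤ c := hV₁ ▸ Submodule.finrank_le S₁
  constructor
  · intro hker hne
    refine lt_of_le_of_ne (hi hker) fun heq => hne ?_
    obtain ⟨e0, e1⟩ := chamber_key c hc θ₀ θ₁ hθ₀ hθ₁ hθ₁' _ _ ha hb heq
    exact ⟨Submodule.finrank_eq_zero.mp e0, Submodule.finrank_eq_zero.mp e1⟩
  · intro hf hne
    refine lt_of_le_of_ne (hii hf) fun heq => hne ?_
    have key : θ₀ * ((c - finrank ℂ S₀ : ℕ) : ℝ) + θ₁ * ((c - finrank ℂ S₁ : ℕ) : ℝ) = 0 := by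
      rw [Nat.cast_sub ha, Nat.cast_sub hb]; ring_nf; ring_nf at heq; linarith
    obtain ⟨e0, e1⟩ := chamber_key c hc θ₀ θ₁ hθ₀ hθ₁ hθ₁' _ _ (Nat.sub_le c _)
      (Nat.sub_le c _) key
    have d0 : finrank ℂ S₀ = finrank ℂ V₀ := by omega
    have d1 : finrank ℂ S₁ = finrank ℂ V₁ := by omega
    exact ⟨Submodule.eq_top_of_finrank_eq d0, Submodule.eq_top_of_finrank_eq d1⟩
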